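/- For all a, b > 0 with a ≠ b, the Neuman–Sándor mean satisfies M(a,b) < C(a,b)^β · A(a,b)^(1-β), where β = -log(log(1+√2))/log 2. -/

import Mathlib

noncomputable def NSmean (a b : ℝ) : ℝ := (a - b) / (2 * Real.arsinh ((a - b) / (a + b)))
noncomputable def Amean (a b : ℝ) : ℝ := (a + b) / 2
noncomputable def Cmean (a b : ℝ) : ℝ := (a ^ 2 + b ^ 2) / (a + b)


open Real Set

private theorem HasDerivAt.of_eq {f : ℝ → ℝ} {a b x : ℝ} (h : HasDerivAt f a x)
    (e : a = b) : HasDerivAt f b x := e ▸ h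

private lemma aux_mono (b : ℝ) (f f' : ℝ → ℝ)
    (hd : ∀ x ∈ Set.Icc (0:ℝ) b, HasDerivAt f (f' x) x)
    (h0 : f 0 = 0) (h' : ∀ x ∈ Set.Ioo (0:ℝ) b, 0 ≤ f' x) :
    ∀ x ∈ Set.Icc (0:ℝ) b, 0 ≤ f x := by
  intro x hx
  rcases le_or_gt b 0 with hb | hb
  · have hx0 : x = 0 := le_antisymm (hx.2.trans hb) hx.1
    rw [hx0, h0]
  · have hmono : MonotoneOn f (Set.Icc 0 b) := by
      apply monotoneOn_of_hasDerivWithinAt_nonneg (convex_Icc 0 b)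
        (fun y hy => (hd y hy).continuousAt.continuousWithinAt)
        (fun y hy => (hd y (interior_subset hy)).hasDerivWithinAt)
        (fun y hy => h' y (by rwa [interior_Icc] at hy))
    have := hmono (Set.left_mem_Icc.2 hb.le) hx hx.1
    rwa [h0] at this

private lemma log_ge_P4 {u : ℝ} (hu : 0 ≤ u) (hu1 : u ≤ 1) :
    u - u^2/2 + u^3/3 - u^4/4 ≤ Real.log (1+u) := by
  have h := aux_mono 1 (fun v => Real.log (1+v) - (v - v^2/2 + v^3/3 - v^4/4))
    (fun v => (1+v)⁻¹ - (1 - v + v^2 - v^3))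
    (fun v hv => by
      have h1 : (0:ℝ) < 1 + v := by linarith [hv.1]
      exact ((((hasDerivAt_id v).const_add 1).log h1.ne').sub
        ((((hasDerivAt_id v).sub ((hasDerivAt_pow 2 v).div_const 2)).add
          ((hasDerivAt_pow 3 v).div_const 3)).sub
          ((hasDerivAt_pow 4 v).div_const 4))).of_eq
        (by rw [one_div]; simp only [id_eq]; push_cast; ring))
    (by norm_num) (fun v hv => by
      have h1 : (0:ℝ) < 1 + v := by linarith [hv.1.le]
      show 0 ≤ (1+v)⁻¹ - (1 - v + v^2 - v^3)
      have he : (1+v)⁻¹ - (1 - v + v^2 - v^3) = v^4 / (1+v) := by field_simp; ring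
      rw [he]; positivity)
  have := h u ⟨hu, hu1⟩
  linarith

private lemma log_le_P5 {u : ℝ} (hu : 0 ≤ u) (hu1 : u ≤ 1) :
    Real.log (1+u) ≤ u - u^2/2 + u^3/3 - u^4/4 + u^5/5 := by
  have h := aux_mono 1 (fun v => (v - v^2/2 + v^3/3 - v^4/4 + v^5/5) - Real.log (1+v))
    (fun v => (1 - v + v^2 - v^3 + v^4) - (1+v)⁻¹)
    (fun v hv => by
      have h1 : (0:ℝ) < 1 + v := by linarith [hv.1]
      exact (((((hasDerivAt_id v).sub ((hasDerivAt_pow 2 v).div_const 2)).add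
          ((hasDerivAt_pow 3 v).div_const 3)).sub
          ((hasDerivAt_pow 4 v).div_const 4)).add
          ((hasDerivAt_pow 5 v).div_const 5)).sub
          (((hasDerivAt_id v).const_add 1).log h1.ne') |>.of_eq
        (by rw [one_div]; simp only [id_eq]; push_cast; ring))
    (by norm_num) (fun v hv => by
      have h1 : (0:ℝ) < 1 + v := by linarith [hv.1.le]
      show 0 ≤ (1 - v + v^2 - v^3 + v^4) - (1+v)⁻¹
      have he : (1 - v + v^2 - v^3 + v^4) - (1+v)⁻¹ = v^5 / (1+v) := by field_simp; ring
      rw [he]; exact div_nonneg (pow_nonneg hv.1.le 5) h1.le)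
  have := h u ⟨hu, hu1⟩
  linarith
private lemma cosh_le_two' : ∀ x, 0 ≤ x → x ≤ 1 → Real.cosh x ≤ 2 := by
  intro x hx0 hx1
  rw [Real.cosh_eq]
  have h1 : Real.exp x ≤ Real.exp 1 := Real.exp_le_exp.2 hx1
  have h2 : Real.exp (-x) ≤ Real.exp 0 := Real.exp_le_exp.2 (by linarith)
  have h3 := Real.exp_one_lt_d9
  rw [Real.exp_zero] at h2
  norm_num at h3 ⊢
  linarith

private lemma sinh_le_1 : ∀ x, 0 ≤ x → x ≤ 1 → Real.sinh x ≤ 2*x := by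
  have h := aux_mono 1 (fun x => 2*x - Real.sinh x) (fun x => 2 - Real.cosh x)
    (fun x _ => ((hasDerivAt_id x).const_mul 2).sub (Real.hasDerivAt_sinh x) |>.of_eq (by ring))
    (by norm_num) (fun x hx => by
      show (0:ℝ) ≤ 2 - Real.cosh x
      have := cosh_le_two' x hx.1.le hx.2.le; linarith)
  intro x hx0 hx1
  have h2 : (0:ℝ) ≤ 2*x - Real.sinh x := h x ⟨hx0, hx1⟩
  linarith

private lemma cosh_le_1 : ∀ x, 0 ≤ x → x ≤ 1 → Real.cosh x ≤ 1 + x^2 := by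
  have h := aux_mono 1 (fun x => 1 + x^2 - Real.cosh x) (fun x => 2*x - Real.sinh x)
    (fun x _ => (((hasDerivAt_pow 2 x).const_add 1).sub (Real.hasDerivAt_cosh x)).of_eq
      (by push_cast; ring))
    (by norm_num) (fun x hx => by
      show (0:ℝ) ≤ 2*x - Real.sinh x
      have := sinh_le_1 x hx.1.le hx.2.le; linarith)
  intro x hx0 hx1
  have h2 : (0:ℝ) ≤ 1 + x^2 - Real.cosh x := h x ⟨hx0, hx1⟩
  linarith

private lemma sinh_le_2 : ∀ x, 0 ≤ x → x ≤ 1 → Real.sinh x ≤ x + x^3/3 := by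
  have h := aux_mono 1 (fun x => x + x^3/3 - Real.sinh x) (fun x => 1 + x^2 - Real.cosh x)
    (fun x _ => (((hasDerivAt_id x).add ((hasDerivAt_pow 3 x).div_const 3)).sub
      (Real.hasDerivAt_sinh x)).of_eq (by push_cast [id_eq]; ring))
    (by norm_num) (fun x hx => by
      show (0:ℝ) ≤ 1 + x^2 - Real.cosh x
      have := cosh_le_1 x hx.1.le hx.2.le; linarith)
  intro x hx0 hx1
  have h2 : (0:ℝ) ≤ x + x^3/3 - Real.sinh x := h x ⟨hx0, hx1⟩
  linarith

private lemma cosh_le_2 : ∀ x, 0 ≤ x → x ≤ 1 → Real.cosh x ≤ 1 + x^2/2 + x^4/12 := by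
  have h := aux_mono 1 (fun x => 1 + x^2/2 + x^4/12 - Real.cosh x)
    (fun x => x + x^3/3 - Real.sinh x)
    (fun x _ => (((((hasDerivAt_pow 2 x).div_const 2).const_add 1).add
      ((hasDerivAt_pow 4 x).div_const 12)).sub (Real.hasDerivAt_cosh x)).of_eq
      (by push_cast; ring))
    (by norm_num) (fun x hx => by
      show (0:ℝ) ≤ x + x^3/3 - Real.sinh x
      have := sinh_le_2 x hx.1.le hx.2.le; linarith)
  intro x hx0 hx1
  have h2 : (0:ℝ) ≤ 1 + x^2/2 + x^4/12 - Real.cosh x := h x ⟨hx0, hx1⟩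
  linarith

private lemma sinh_ub : ∀ x, 0 ≤ x → x ≤ 1 → Real.sinh x ≤ x + x^3/6 + x^5/60 := by
  have h := aux_mono 1 (fun x => x + x^3/6 + x^5/60 - Real.sinh x)
    (fun x => 1 + x^2/2 + x^4/12 - Real.cosh x)
    (fun x _ => ((((hasDerivAt_id x).add ((hasDerivAt_pow 3 x).div_const 6)).add
      ((hasDerivAt_pow 5 x).div_const 60)).sub (Real.hasDerivAt_sinh x)).of_eq
      (by push_cast [id_eq]; ring))
    (by norm_num) (fun x hx => by
      show (0:ℝ) ≤ 1 + x^2/2 + x^4/12 - Real.cosh x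
      have := cosh_le_2 x hx.1.le hx.2.le; linarith)
  intro x hx0 hx1
  have h2 : (0:ℝ) ≤ x + x^3/6 + x^5/60 - Real.sinh x := h x ⟨hx0, hx1⟩
  linarith

private lemma cosh_ub : ∀ x, 0 ≤ x → x ≤ 1 → Real.cosh x ≤ 1 + x^2/2 + x^4/24 + x^6/360 := by
  have h := aux_mono 1 (fun x => 1 + x^2/2 + x^4/24 + x^6/360 - Real.cosh x)
    (fun x => x + x^3/6 + x^5/60 - Real.sinh x)
    (fun x _ => ((((((hasDerivAt_pow 2 x).div_const 2).const_add 1).add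
      ((hasDerivAt_pow 4 x).div_const 24)).add ((hasDerivAt_pow 6 x).div_const 360)).sub
      (Real.hasDerivAt_cosh x)).of_eq (by push_cast; ring))
    (by norm_num) (fun x hx => by
      show (0:ℝ) ≤ x + x^3/6 + x^5/60 - Real.sinh x
      have := sinh_ub x hx.1.le hx.2.le; linarith)
  intro x hx0 hx1
  have h2 : (0:ℝ) ≤ 1 + x^2/2 + x^4/24 + x^6/360 - Real.cosh x := h x ⟨hx0, hx1⟩
  linarith

private lemma sinh_lb0 : ∀ x, 0 ≤ x → x ≤ 1 → x ≤ Real.sinh x := by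
  have h := aux_mono 1 (fun x => Real.sinh x - x) (fun x => Real.cosh x - 1)
    (fun x _ => (Real.hasDerivAt_sinh x).sub (hasDerivAt_id x))
    (by norm_num) (fun x hx => by
      show (0:ℝ) ≤ Real.cosh x - 1
      have := Real.one_le_cosh x; linarith)
  intro x hx0 hx1
  have h2 : (0:ℝ) ≤ Real.sinh x - x := h x ⟨hx0, hx1⟩
  linarith

private lemma cosh_lb2 : ∀ x, 0 ≤ x → x ≤ 1 → 1 + x^2/2 ≤ Real.cosh x := by
  have h := aux_mono 1 (fun x => Real.cosh x - (1 + x^2/2)) (fun x => Real.sinh x - x)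
    (fun x _ => ((Real.hasDerivAt_cosh x).sub (((hasDerivAt_pow 2 x).div_const 2).const_add 1)).of_eq
      (by push_cast; ring))
    (by norm_num) (fun x hx => by
      show (0:ℝ) ≤ Real.sinh x - x
      have := sinh_lb0 x hx.1.le hx.2.le; linarith)
  intro x hx0 hx1
  have h2 : (0:ℝ) ≤ Real.cosh x - (1 + x^2/2) := h x ⟨hx0, hx1⟩
  linarith

private lemma sinh_lb : ∀ x, 0 ≤ x → x ≤ 1 → x + x^3/6 ≤ Real.sinh x := by
  have h := aux_mono 1 (fun x => Real.sinh x - (x + x^3/6)) (fun x => Real.cosh x - (1 + x^2/2))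
    (fun x _ => ((Real.hasDerivAt_sinh x).sub
      ((hasDerivAt_id x).add ((hasDerivAt_pow 3 x).div_const 6))).of_eq
      (by push_cast [id_eq]; ring))
    (by norm_num) (fun x hx => by
      show (0:ℝ) ≤ Real.cosh x - (1 + x^2/2)
      have := cosh_lb2 x hx.1.le hx.2.le; linarith)
  intro x hx0 hx1
  have h2 : (0:ℝ) ≤ Real.sinh x - (x + x^3/6) := h x ⟨hx0, hx1⟩
  linarith

private lemma cosh_lb : ∀ x, 0 ≤ x → x ≤ 1 → 1 + x^2/2 + x^4/24 ≤ Real.cosh x := by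
  have h := aux_mono 1 (fun x => Real.cosh x - (1 + x^2/2 + x^4/24))
    (fun x => Real.sinh x - (x + x^3/6))
    (fun x _ => ((Real.hasDerivAt_cosh x).sub ((((hasDerivAt_pow 2 x).div_const 2).const_add 1).add
      ((hasDerivAt_pow 4 x).div_const 24))).of_eq (by push_cast; ring))
    (by norm_num) (fun x hx => by
      show (0:ℝ) ≤ Real.sinh x - (x + x^3/6)
      have := sinh_lb x hx.1.le hx.2.le; linarith)
  intro x hx0 hx1
  have h2 : (0:ℝ) ≤ Real.cosh x - (1 + x^2/2 + x^4/24) := h x ⟨hx0, hx1⟩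
  linarith
set_option maxHeartbeats 1000000 in
private lemma Hsmall (β : ℝ) (hb1 : (0.182:ℝ) ≤ β) :
    ∀ x : ℝ, 0 < x → x ≤ 2/5 →
      Real.log (Real.sinh x) - Real.log x < 2*β*Real.log (Real.cosh x) := by
  intro x hx0 hx1
  have hx1' : x ≤ 1 := by linarith
  have hsp : 0 < Real.sinh x := Real.sinh_pos_iff.2 hx0
  have hcp : 0 < Real.cosh x := Real.cosh_pos x
  have hc1 : 1 ≤ Real.cosh x := Real.one_le_cosh x
  have e1 : Real.log (Real.sinh x) - Real.log x = Real.log (Real.sinh x / x) :=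
    (Real.log_div hsp.ne' hx0.ne').symm
  have e2 : Real.log (Real.sinh x / x) ≤ Real.sinh x / x - 1 :=
    Real.log_le_sub_one_of_pos (div_pos hsp hx0)
  have e3 : 1 - (Real.cosh x)⁻¹ ≤ Real.log (Real.cosh x) := by
    have := Real.log_le_sub_one_of_pos (inv_pos.2 hcp)
    rw [Real.log_inv] at this
    linarith
  have hsU := sinh_ub x hx0.le hx1'
  have hsL := sinh_lb0 x hx0.le hx1'
  have hcU := cosh_ub x hx0.le hx1'
  have hcL := cosh_lb x hx0.le hx1'
  have hinv : (Real.cosh x)⁻¹ ≤ 1 := by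
    rw [inv_le_one_iff₀]; right; exact hc1
  have key : Real.sinh x / x - 1 < 2*(0.182:ℝ)*(1 - (Real.cosh x)⁻¹) := by
    have einv : 1 - (Real.cosh x)⁻¹ = (Real.cosh x - 1)/Real.cosh x := by
      field_simp
    rw [einv, div_sub_one hx0.ne', ← mul_div_assoc, div_lt_div_iff₀ hx0 hcp]
    have p1 : (Real.sinh x - x) * Real.cosh x ≤
        (x^3/6 + x^5/60) * (1 + x^2/2 + x^4/24 + x^6/360) := by
      apply mul_le_mul (by linarith) hcU hcp.le (by positivity)
    have p2 : (2*0.182*(x^2/2 + x^4/24)) * x ≤ (2*0.182*(Real.cosh x - 1)) * x := by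
      have : x^2/2 + x^4/24 ≤ Real.cosh x - 1 := by linarith
      nlinarith
    have hx2 : x^2 ≤ 4/25 := by nlinarith
    have hy0 : (0:ℝ) ≤ x^2 := sq_nonneg x
    have hy2 : (x^2)^2 ≤ (4/25:ℝ)^2 := by nlinarith
    have hy3 : (x^2)^3 ≤ (4/25:ℝ)^3 := by nlinarith
    have hy4 : (x^2)^4 ≤ (4/25:ℝ)^4 := by nlinarith
    have hG : (0:ℝ) < 23/1500 - 509/6000*x^2 - 11/720*(x^2)^2 - 1/864*(x^2)^3
        - 1/21600*(x^2)^4 := by norm_num at hy2 hy3 hy4 ⊢; linarith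
    have hid : (2*(0.182:ℝ)*(x^2/2 + x^4/24))*x
        - (x^3/6 + x^5/60) * (1 + x^2/2 + x^4/24 + x^6/360)
        = x^3*(23/1500 - 509/6000*x^2 - 11/720*(x^2)^2 - 1/864*(x^2)^3
          - 1/21600*(x^2)^4) := by norm_num; ring
    have p3 := mul_pos (pow_pos hx0 3) hG
    linarith
  have hfin : 2*(0.182:ℝ)*(1 - (Real.cosh x)⁻¹) ≤ 2*β*(1 - (Real.cosh x)⁻¹) := by
    have h0 : (0:ℝ) ≤ 1 - (Real.cosh x)⁻¹ := by linarith
    have := mul_nonneg (by linarith : (0:ℝ) ≤ 2*β - 2*0.182) h0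
    nlinarith
  have hlog : 2*β*(1 - (Real.cosh x)⁻¹) ≤ 2*β*Real.log (Real.cosh x) := by
    have hb0 : (0:ℝ) ≤ 2*β := by linarith
    exact mul_le_mul_of_nonneg_left e3 hb0
  linarith [e1, e2, key, hfin, hlog]
set_option maxHeartbeats 1000000 in
private lemma Hpos (β : ℝ) (hb1 : (0.182:ℝ) ≤ β) (hb2 : β ≤ 0.1824)
    (hcl : (0.88:ℝ) ≤ Real.arsinh 1) (hcu : Real.arsinh 1 ≤ 0.89)
    (hend : β * Real.log 2 + Real.log (Real.arsinh 1) = 0) :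
    ∀ x : ℝ, 0 < x → x < Real.arsinh 1 →
      Real.log (Real.sinh x) - Real.log x < 2*β*Real.log (Real.cosh x) := by
  intro x hx0 hxc
  rcases le_or_gt x (2/5) with hx | hx
  · exact Hsmall β hb1 x hx0 hx
  set c : ℝ := Real.arsinh 1 with hc
  set H : ℝ → ℝ := fun z => 2*β*Real.log (Real.cosh z) - Real.log (Real.sinh z) + Real.log z
    with hHdef
  set H₁ : ℝ → ℝ := fun z =>
    2*β*(Real.sinh z/Real.cosh z) - Real.cosh z/Real.sinh z + z⁻¹ with hH1def
  set H₂ : ℝ → ℝ := fun z => 2*β*(1/(Real.cosh z)^2) + 1/(Real.sinh z)^2 - (z^2)⁻¹ with hH2def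
  have hd1 : ∀ z : ℝ, 0 < z → HasDerivAt H (H₁ z) z := by
    intro z hz
    have hsp : 0 < Real.sinh z := Real.sinh_pos_iff.2 hz
    have hcp : 0 < Real.cosh z := Real.cosh_pos z
    exact ((((Real.hasDerivAt_cosh z).log hcp.ne').const_mul (2*β)).sub
      ((Real.hasDerivAt_sinh z).log hsp.ne')).add (Real.hasDerivAt_log hz.ne') |>.of_eq
      (by ring)
  have hd2 : ∀ z : ℝ, 0 < z → HasDerivAt H₁ (H₂ z) z := by
    intro z hz
    have hsp : 0 < Real.sinh z := Real.sinh_pos_iff.2 hz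
    have hcp : 0 < Real.cosh z := Real.cosh_pos z
    have hsq := Real.cosh_sq_sub_sinh_sq z
    refine ((((Real.hasDerivAt_sinh z).div (Real.hasDerivAt_cosh z) hcp.ne').const_mul
      (2*β)).sub ((Real.hasDerivAt_cosh z).div (Real.hasDerivAt_sinh z) hsp.ne')).add
      (hasDerivAt_inv hz.ne') |>.of_eq ?_
    have e1 : Real.cosh z * Real.cosh z - Real.sinh z * Real.sinh z = 1 := by
      nlinarith
    have e2 : Real.sinh z * Real.sinh z - Real.cosh z * Real.cosh z = -1 := by
      nlinarith
    rw [e1, e2, hH2def]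
    field_simp
    ring
  -- concavity of H on [2/5, c]
  have hsub : Set.Icc (2/5 : ℝ) c ⊆ Set.Ioi 0 := by
    intro z hz
    have := hz.1
    simp only [Set.mem_Ioi]
    linarith
  have hintsub : interior (Set.Icc (2/5 : ℝ) c) = Set.Ioo (2/5 : ℝ) c := interior_Icc
  have hconc : ConcaveOn ℝ (Set.Icc (2/5 : ℝ) c) H := by
    apply concaveOn_of_hasDerivWithinAt2_nonpos (convex_Icc _ _)
      (f' := H₁) (f'' := H₂)
    · intro z hz
      exact (hd1 z (by linarith [hz.1] : (0:ℝ) < z)).continuousAt.continuousWithinAt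
    · intro z hz
      rw [hintsub] at hz
      exact (hd1 z (by linarith [hz.1] : (0:ℝ) < z)).hasDerivWithinAt
    · intro z hz
      rw [hintsub] at hz
      exact (hd2 z (by linarith [hz.1] : (0:ℝ) < z)).hasDerivWithinAt
    · intro z hz
      rw [hintsub] at hz
      obtain ⟨hz1, hz2⟩ := hz
      have hz0 : (0:ℝ) < z := by linarith
      have hz89 : z ≤ 0.89 := by linarith
      have hz1' : z ≤ 1 := by linarith
      have hsp : 0 < Real.sinh z := Real.sinh_pos_iff.2 hz0
      have hcp : 0 < Real.cosh z := Real.cosh_pos z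
      have hsL := sinh_lb z hz0.le hz1'
      have hsU := sinh_ub z hz0.le hz1'
      have hcL := cosh_lb2 z hz0.le hz1'
      -- key polynomial inequality
      have key : (2*β*(Real.sinh z)^2 + (Real.cosh z)^2)*z^2 ≤ (Real.sinh z)^2*(Real.cosh z)^2 := by
        have hL2 : (z + z^3/6)^2 - z^2 ≤ (Real.sinh z)^2 - z^2 := by
          have := pow_le_pow_left₀ (by positivity : (0:ℝ) ≤ z + z^3/6) hsL 2
          linarith
        have hLz : (0:ℝ) ≤ (z + z^3/6)^2 - z^2 := by nlinarith
        have hC2 : (1 + z^2/2)^2 ≤ (Real.cosh z)^2 := by nlinarith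
        have hU2 : (Real.sinh z)^2 ≤ (z + z^3/6 + z^5/60)^2 := by nlinarith
        have hprod : (1 + z^2/2)^2 * ((z + z^3/6)^2 - z^2) ≤
            (Real.cosh z)^2 * ((Real.sinh z)^2 - z^2) := by
          apply mul_le_mul hC2 hL2 hLz (by positivity)
        have hb' : 2*β*(Real.sinh z)^2*z^2 ≤ 2*(0.1824:ℝ)*(z + z^3/6 + z^5/60)^2*z^2 := by
          nlinarith [sq_nonneg (Real.sinh z), sq_nonneg z, mul_nonneg (sq_nonneg (Real.sinh z)) (sq_nonneg z)]
        have hpoly : 2*(0.1824:ℝ)*(z + z^3/6 + z^5/60)^2*z^2 ≤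
            (1 + z^2/2)^2 * ((z + z^3/6)^2 - z^2) := by
          have h04 : (4/25:ℝ) ≤ z^2 := by nlinarith
          have h089 : z^2 ≤ (0.89:ℝ)^2 := by nlinarith
          nlinarith [pow_pos hz0 6, sq_nonneg z, pow_pos hz0 2, pow_pos hz0 4,
            mul_le_mul h089 h089 (sq_nonneg z) (by norm_num : (0:ℝ) ≤ (0.89:ℝ)^2),
            pow_pos hz0 8]
        nlinarith [hprod, hb', hpoly]
      -- conclude H₂ z ≤ 0
      show H₂ z ≤ 0
      rw [hH2def]
      have e : 2*β*(1/(Real.cosh z)^2) + 1/(Real.sinh z)^2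
          = (2*β*(Real.sinh z)^2 + (Real.cosh z)^2)/((Real.sinh z)^2*(Real.cosh z)^2) := by
        have hs0 : Real.sinh z ≠ 0 := hsp.ne'
        have hc0 : Real.cosh z ≠ 0 := hcp.ne'
        field_simp
      simp only []
      rw [e, sub_nonpos, inv_eq_one_div]
      rw [div_le_div_iff₀ (by positivity) (by positivity)]
      nlinarith [key, pow_pos hsp 2, pow_pos hcp 2]
  -- endpoint values
  have hc25 : (2/5:ℝ) < c := by linarith
  have hH25 : 0 < H (2/5) := by
    have := Hsmall β hb1 (2/5) (by norm_num) (le_refl _)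
    simp only [hHdef]
    linarith
  have hHc : H c = 0 := by
    have hcosh : Real.cosh c = Real.sqrt 2 := by
      rw [hc, Real.cosh_arsinh]
      norm_num
    have hsinh : Real.sinh c = 1 := Real.sinh_arsinh 1
    simp only [hHdef]
    rw [hcosh, hsinh, Real.log_one, Real.log_sqrt (by norm_num : (0:ℝ) ≤ 2)]
    rw [hc]
    field_simp
    linarith [hend]
  -- chord argument
  have hd : (0:ℝ) < c - 2/5 := by linarith
  set lam : ℝ := (c - x)/(c - 2/5) with hlam
  set mu : ℝ := (x - 2/5)/(c - 2/5) with hmu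
  have hlam0 : 0 < lam := div_pos (by linarith) hd
  have hmu0 : 0 ≤ mu := div_nonneg (by linarith) hd.le
  have hsum : lam + mu = 1 := by
    have he : (c - x) + (x - 2/5) = c - 2/5 := by ring
    rw [hlam, hmu, ← add_div, he, div_self hd.ne']
  have hcomb : lam * (2/5) + mu * c = x := by
    rw [hlam, hmu, div_mul_eq_mul_div, div_mul_eq_mul_div, ← add_div,
      div_eq_iff hd.ne']
    ring
  have hch := hconc.2 (Set.mem_Icc.2 ⟨le_refl _, hc25.le⟩)
    (Set.mem_Icc.2 ⟨hc25.le, le_refl _⟩) hlam0.le hmu0 hsum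
  rw [smul_eq_mul, smul_eq_mul, smul_eq_mul, smul_eq_mul, hcomb, hHc, mul_zero, add_zero] at hch
  have hHx : 0 < H x := lt_of_lt_of_le (mul_pos hlam0 hH25) hch
  simp only [hHdef] at hHx
  linarith
private lemma log_bounds {t lo hi : ℝ} (h0 : 0 ≤ lo) (hl : lo ≤ t) (hu : t ≤ hi) (h1 : hi ≤ 1) :
    lo - hi^2/2 + lo^3/3 - hi^4/4 ≤ Real.log (1+t) ∧
    Real.log (1+t) ≤ hi - lo^2/2 + hi^3/3 - lo^4/4 + hi^5/5 := by
  have ht0 : 0 ≤ t := h0.trans hl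
  have ht1 : t ≤ 1 := hu.trans h1
  have p2l := pow_le_pow_left₀ h0 hl 2
  have p2u := pow_le_pow_left₀ ht0 hu 2
  have p3l := pow_le_pow_left₀ h0 hl 3
  have p3u := pow_le_pow_left₀ ht0 hu 3
  have p4l := pow_le_pow_left₀ h0 hl 4
  have p4u := pow_le_pow_left₀ ht0 hu 4
  have p5u := pow_le_pow_left₀ ht0 hu 5
  constructor
  · have := log_ge_P4 ht0 ht1
    linarith
  · have := log_le_P5 ht0 ht1
    linarith

set_option maxHeartbeats 1000000 in
private lemma numeric_facts (β : ℝ)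
    (hβ : β = -Real.log (Real.log (1 + Real.sqrt 2)) / Real.log 2) :
    (0.182:ℝ) ≤ β ∧ β ≤ 0.1824 ∧ (0.88:ℝ) ≤ Real.arsinh 1 ∧ Real.arsinh 1 ≤ 0.89 ∧
      β * Real.log 2 + Real.log (Real.arsinh 1) = 0 := by
  have hsq : Real.sqrt 2 ^ 2 = 2 := Real.sq_sqrt (by norm_num)
  have hs0 : (0:ℝ) ≤ Real.sqrt 2 := Real.sqrt_nonneg 2
  have hs2l : (1.414213562:ℝ) ≤ Real.sqrt 2 := by nlinarith
  have hs2u : Real.sqrt 2 ≤ (1.414213563:ℝ) := by nlinarith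
  have hars : Real.arsinh 1 = Real.log (1 + Real.sqrt 2) := by
    unfold Real.arsinh
    norm_num
  set c : ℝ := Real.arsinh 1 with hcdef
  set u : ℝ := (Real.sqrt 2 - 1)/2 with hudef
  have hu_l : (0.207106781:ℝ) ≤ u := by rw [hudef]; linarith
  have hu_u : u ≤ (0.2071067815:ℝ) := by rw [hudef]; linarith
  have h2u : 1 + Real.sqrt 2 = 2*(1+u) := by rw [hudef]; ring
  have hlogsplit : c = Real.log 2 + Real.log (1+u) := by
    rw [hars, h2u, Real.log_mul (by norm_num) (by nlinarith)]
  have hlogu := log_bounds (by norm_num : (0:ℝ) ≤ 0.207106781) hu_l hu_u (by norm_num)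
  have hl2l := Real.log_two_gt_d9
  have hl2u := Real.log_two_lt_d9
  have hC1 : (0.8813085:ℝ) ≤ c := by
    rw [hlogsplit]
    have h := hlogu.1
    norm_num at h ⊢
    linarith
  have hC2 : c ≤ (0.8813848:ℝ) := by
    rw [hlogsplit]
    have h := hlogu.2
    norm_num at h ⊢
    linarith
  have hcpos : (0:ℝ) < c := by linarith
  set w : ℝ := c⁻¹ - 1 with hwdef
  have hinvc : c⁻¹ * c = 1 := inv_mul_cancel₀ hcpos.ne'
  have hicpos : (0:ℝ) < c⁻¹ := inv_pos.2 hcpos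
  have hw_l : (0.1345782:ℝ) ≤ w := by
    have h := mul_le_mul_of_nonneg_left hC2 hicpos.le
    rw [hinvc] at h
    rw [hwdef]
    linarith
  have hw_u : w ≤ (0.1346765:ℝ) := by
    have h := mul_le_mul_of_nonneg_left hC1 hicpos.le
    rw [hinvc] at h
    rw [hwdef]
    linarith
  have h1w : 1 + w = c⁻¹ := by rw [hwdef]; ring
  have hlogw : Real.log (1+w) = -Real.log c := by rw [h1w, Real.log_inv]
  have hlw := log_bounds (by norm_num : (0:ℝ) ≤ 0.1345782) hw_l hw_u (by norm_num)
  rw [hlogw] at hlw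
  have hmL : (0.126239:ℝ) ≤ -Real.log c := by
    have h := hlw.1
    norm_num at h ⊢
    linarith
  have hmU : -Real.log c ≤ (0.126362:ℝ) := by
    have h := hlw.2
    norm_num at h ⊢
    linarith
  have hβc : β = -Real.log c / Real.log 2 := by
    rw [hβ, ← hars]
  have hl2pos : (0:ℝ) < Real.log 2 := by linarith
  have hb1 : (0.182:ℝ) ≤ β := by
    rw [hβc, le_div_iff₀ hl2pos]
    nlinarith
  have hb2 : β ≤ (0.1824:ℝ) := by
    rw [hβc, div_le_iff₀ hl2pos]
    nlinarith
  have hend : β * Real.log 2 + Real.log c = 0 := by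
    rw [hβc, div_mul_cancel₀ _ hl2pos.ne']
    ring
  exact ⟨hb1, hb2, by linarith, by linarith, hend⟩
set_option maxHeartbeats 1000000 in
private lemma key_ineq (a b : ℝ) (ha : 0 < a) (hb : 0 < b) (hba : b < a)
    (β : ℝ) (hb1 : (0.182:ℝ) ≤ β) (hb2 : β ≤ 0.1824)
    (hcl : (0.88:ℝ) ≤ Real.arsinh 1) (hcu : Real.arsinh 1 ≤ 0.89)
    (hend : β * Real.log 2 + Real.log (Real.arsinh 1) = 0) :
    NSmean a b < Cmean a b ^ β * Amean a b ^ (1 - β) := by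
  have hab : 0 < a + b := by linarith
  set T : ℝ := (a - b)/(a + b) with hTdef
  have hT0 : 0 < T := div_pos (by linarith) hab
  have hT1 : T < 1 := by rw [hTdef, div_lt_one hab]; linarith
  set x : ℝ := Real.arsinh T with hxdef
  have hx0 : 0 < x := Real.arsinh_pos_iff.2 hT0
  have hxc : x < Real.arsinh 1 := Real.arsinh_lt_arsinh.2 hT1
  have hH := Hpos β hb1 hb2 hcl hcu hend x hx0 hxc
  have hsinh : Real.sinh x = T := Real.sinh_arsinh T
  have hApos : 0 < Amean a b := by unfold Amean; linarith
  have h1T : (0:ℝ) < 1 + T^2 := by positivity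
  have hrpow_pos : (0:ℝ) < (1+T^2) ^ β := Real.rpow_pos_of_pos h1T β
  have hcoshsq : 1 + T^2 = Real.cosh x ^ 2 := by
    rw [← hsinh]
    exact (Real.cosh_sq' x).symm
  have hlogT : Real.log (1+T^2) = 2 * Real.log (Real.cosh x) := by
    rw [hcoshsq, Real.log_pow]
    push_cast
    ring
  have hkey : T / x < (1+T^2) ^ β := by
    rw [← Real.exp_log (show (0:ℝ) < T/x from div_pos hT0 hx0), ← Real.exp_log hrpow_pos]
    apply Real.exp_lt_exp.2
    rw [Real.log_div hT0.ne' hx0.ne', Real.log_rpow h1T, hlogT, ← hsinh]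
    linarith [hH]
  have hC : Cmean a b = Amean a b * (1+T^2) := by
    unfold Cmean Amean
    rw [hTdef]
    field_simp
    ring
  have hN : NSmean a b = Amean a b * (T / x) := by
    have hT : a - b = T*(a+b) := by rw [hTdef]; field_simp
    have hx0' : Real.arsinh T ≠ 0 := hx0.ne'
    unfold NSmean Amean
    rw [hT]
    field_simp
    ring
  have hrhs : Cmean a b ^ β * Amean a b ^ (1-β) = Amean a b * (1+T^2)^β := by
    rw [hC, Real.mul_rpow hApos.le h1T.le]
    have : Amean a b ^ β * Amean a b ^ (1-β) = Amean a b := by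
      rw [← Real.rpow_add hApos]
      norm_num
    calc Amean a b ^ β * (1+T^2) ^ β * Amean a b ^ (1-β)
        = (Amean a b ^ β * Amean a b ^ (1-β)) * (1+T^2) ^ β := by ring
      _ = Amean a b * (1+T^2)^β := by rw [this]
  rw [hN, hrhs]
  exact mul_lt_mul_of_pos_left hkey hApos

theorem stmt_1 (a b : ℝ) (ha : 0 < a) (hb : 0 < b) (hab : a ≠ b)
    (β : ℝ) (hβ : β = -Real.log (Real.log (1 + Real.sqrt 2)) / Real.log 2) :
    NSmean a b < Cmean a b ^ β * Amean a b ^ (1 - β) := by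
  obtain ⟨h1, h2, h3, h4, h5⟩ := numeric_facts β hβ
  rcases hab.lt_or_gt with h | h
  · have hsymN : NSmean a b = NSmean b a := by
      unfold NSmean
      rw [show a - b = -(b - a) by ring, show a + b = b + a by ring,
        show -(b - a) / (b + a) = -((b - a) / (b + a)) from neg_div _ _,
        Real.arsinh_neg]
      ring
    have hsymC : Cmean a b = Cmean b a := by unfold Cmean; ring_nf
    have hsymA : Amean a b = Amean b a := by unfold Amean; ring_nf
    rw [hsymN, hsymC, hsymA]
    exact key_ineq b a hb ha h β h1 h2 h3 h4 h5
  · exact key_ineq a b ha hb h β h1 h2 h3 h4 h5
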